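/- Ergodic decomposition for powers: Let X be a measurable space, f : X → X a measurable map, μ an f-invariant ergodic probability measure, and N ≥ 1 an integer. Then there exist an integer k dividing N and a probability measure ν on X such that ν is f^k-invariant, ν is invariant and ergodic for f^N, and μ = (1/k)·Σ_{i=0}^{k−1} (f^i)_*ν. -/

import Mathlib

open MeasureTheory
open scoped ENNReal

private lemma aux_full {X : Type*} [MeasurableSpace X] {f : X → X} (hf : Measurable f)
    {μ : Measure X} [IsProbabilityMeasure μ] (herg : Ergodic f μ)
    {n : ℕ} (hn : 0 < n) {s : Set X} (hs : MeasurableSet s)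
    (hinv : f^[n] ⁻¹' s =ᵐ[μ] s) (hpos : μ s ≠ 0) :
    μ (⋃ i ∈ Finset.range n, f^[i] ⁻¹' s) = 1 := by
  set u : Set X := ⋃ i ∈ Finset.range n, f^[i] ⁻¹' s with hu
  have hum : MeasurableSet u :=
    Finset.measurableSet_biUnion _ fun i _ => (hf.iterate i) hs
  have hsub : s ⊆ u := by
    intro x hx
    simp only [hu, Set.mem_iUnion, Finset.mem_range]
    exact ⟨0, hn, hx⟩
  have hpre : f ⁻¹' u =ᵐ[μ] u := by
    obtain ⟨h1, h2⟩ := ae_eq_set.mp hinv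
    refine ae_eq_set.mpr ⟨measure_mono_null ?_ h1, measure_mono_null ?_ h2⟩
    · rintro x ⟨hx1, hx2⟩
      simp only [hu, Set.mem_preimage, Set.mem_iUnion, Finset.mem_range] at hx1 hx2
      obtain ⟨i, hi, hxi⟩ := hx1
      rw [← Function.iterate_succ_apply] at hxi
      rcases lt_or_eq_of_le (Nat.succ_le_of_lt hi) with h | h
      · exact absurd (⟨i + 1, h, hxi⟩ : ∃ j, ∃ (_ : j < n), f^[j] x ∈ s) hx2
      · exact ⟨by rwa [← h], fun hxs => hx2 ⟨0, hn, hxs⟩⟩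
    · rintro x ⟨hx1, hx2⟩
      simp only [hu, Set.mem_preimage, Set.mem_iUnion, Finset.mem_range] at hx1 hx2
      push_neg at hx2
      obtain ⟨i, hi, hxi⟩ := hx1
      have hxs : x ∈ s := by
        rcases Nat.eq_zero_or_pos i with rfl | hi0
        · exact hxi
        · refine absurd hxi (by
            have h' : i - 1 + 1 = i := Nat.succ_pred_eq_of_pos hi0
            have := hx2 (i - 1) (lt_of_le_of_lt (Nat.sub_le _ _) hi)
            rwa [← Function.iterate_succ_apply, Nat.succ_eq_add_one, h'] at this)
      refine ⟨hxs, ?_⟩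
      have h' : n - 1 + 1 = n := Nat.succ_pred_eq_of_pos hn
      have := hx2 (n - 1) (Nat.sub_lt hn one_pos)
      rwa [← Function.iterate_succ_apply, Nat.succ_eq_add_one, h'] at this
  rcases herg.quasiErgodic.ae_empty_or_univ₀ hum.nullMeasurableSet hpre with h | h
  · exact absurd (measure_mono_null hsub (ae_eq_empty.mp h)) hpos
  · rw [measure_congr h, measure_univ]

private lemma aux_inter_ae {α : Type*} {m : MeasurableSpace α} {μ : Measure α} {s t s' t' : Set α}
    (h : s =ᵐ[μ] t) (h' : s' =ᵐ[μ] t') : (s ∩ s' : Set α) =ᵐ[μ] (t ∩ t' : Set α) :=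
  Filter.EventuallyEq.inter h h'

/-- **Ergodic decomposition for powers.** Let `f` be a measurable map, `μ` an
`f`-invariant ergodic probability measure, and `N ≥ 1`. Then there exist `k ∣ N` and a
probability measure `ν` which is `f^k`-invariant, invariant and ergodic for `f^N`, and
such that `μ = (1/k)·Σ_{i=0}^{k−1} (f^i)_* ν`. -/
theorem ergodic_decomposition_for_powers {X : Type*} [MeasurableSpace X]
    (f : X → X) (hf : Measurable f)
    (μ : Measure X) [IsProbabilityMeasure μ] (herg : Ergodic f μ)
    (N : ℕ) (hN : 1 ≤ N) :
    ∃ (k : ℕ) (ν : Measure X), k ∣ N ∧ IsProbabilityMeasure ν ∧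
      MeasurePreserving (f^[k]) ν ν ∧
      Ergodic (f^[N]) ν ∧
      μ = (k : ℝ≥0∞)⁻¹ • ∑ i ∈ Finset.range k, Measure.map (f^[i]) ν := by
  classical
  have hμf : MeasurePreserving f μ μ := herg.toMeasurePreserving
  have hit : ∀ n : ℕ, MeasurePreserving (f^[n]) μ μ := fun n => hμf.iterate n
  have hm : ∀ n : ℕ, Measurable (f^[n]) := fun n => hf.iterate n
  have hN0 : 0 < N := hN
  have hNne : (N : ℝ≥0∞) ≠ 0 := Nat.cast_ne_zero.mpr hN0.ne'
  have hNtop : (N : ℝ≥0∞) ≠ ∞ := ENNReal.natCast_ne_top N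
  set S : Set ℝ≥0∞ :=
    {r | ∃ s : Set X, MeasurableSet s ∧ f^[N] ⁻¹' s =ᵐ[μ] s ∧ μ s ≠ 0 ∧ μ s = r} with hS
  set m : ℝ≥0∞ := sInf S with hmdef
  have hlow : ∀ r ∈ S, (N : ℝ≥0∞)⁻¹ ≤ r := by
    rintro r ⟨s, hs, hinv, hpos, rfl⟩
    have hfull := aux_full hf herg hN0 hs hinv hpos
    have hle : (1 : ℝ≥0∞) ≤ (N : ℝ≥0∞) * μ s := by
      calc (1 : ℝ≥0∞) = μ (⋃ i ∈ Finset.range N, f^[i] ⁻¹' s) := hfull.symm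
        _ ≤ ∑ i ∈ Finset.range N, μ (f^[i] ⁻¹' s) := measure_biUnion_finset_le _ _
        _ = ∑ _i ∈ Finset.range N, μ s := by
              refine Finset.sum_congr rfl fun i _ => ?_
              exact (hit i).measure_preimage hs.nullMeasurableSet
        _ = (N : ℝ≥0∞) * μ s := by
              simp [Finset.sum_const, mul_comm]
    have h2 := mul_le_mul_right hle ((N : ℝ≥0∞)⁻¹)
    rwa [mul_one, ← mul_assoc, ENNReal.inv_mul_cancel hNne hNtop, one_mul] at h2
  have hmlb : (N : ℝ≥0∞)⁻¹ ≤ m := le_sInf hlow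
  have hm1 : m ≤ 1 := sInf_le ⟨Set.univ, MeasurableSet.univ, by simp, by simp, measure_univ⟩
  have hmtop : m ≠ ∞ := (lt_of_le_of_lt hm1 ENNReal.one_lt_top).ne
  have hm0 : m ≠ 0 := (lt_of_lt_of_le (ENNReal.inv_pos.mpr hNtop) hmlb).ne'
  have hmm : m < 2 * m := by
    rw [two_mul]
    exact ENNReal.lt_add_right hmtop hm0
  obtain ⟨r, hrS, hrlt⟩ := sInf_lt_iff.mp hmm
  obtain ⟨A, hAm, hAinv, hApos, rfl⟩ := hrS
  have hAltm : μ A < 2 * m := hrlt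
  -- atom property
  have atom : ∀ t : Set X, MeasurableSet t → t ⊆ A → f^[N] ⁻¹' t =ᵐ[μ] t →
      μ t = 0 ∨ t =ᵐ[μ] A := by
    intro t htm hts htinv
    by_cases ht0 : μ t = 0
    · exact Or.inl ht0
    have hdinv : f^[N] ⁻¹' (A \ t) =ᵐ[μ] (A \ t) := by
      rw [Set.preimage_diff]
      exact hAinv.diff htinv
    by_cases hd0 : μ (A \ t) = 0
    · refine Or.inr (ae_eq_set.mpr ⟨?_, hd0⟩)
      simp [Set.diff_eq_empty.mpr hts]
    · exfalso
      have h1 : m ≤ μ t := sInf_le ⟨t, htm, htinv, ht0, rfl⟩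
      have h2 : m ≤ μ (A \ t) := sInf_le ⟨A \ t, hAm.diff htm, hdinv, hd0, rfl⟩
      have hAt : μ A = μ t + μ (A \ t) := by
        rw [← measure_inter_add_diff (μ := μ) A htm, Set.inter_eq_right.mpr hts]
      have : 2 * m ≤ μ A := by
        rw [hAt, two_mul]
        exact add_le_add h1 h2
      exact absurd hAltm (not_lt.mpr this)
  -- periods
  set P : ℕ → Prop := fun d => f^[d] ⁻¹' A =ᵐ[μ] A with hPdef
  have hPN' : P N := hAinv
  have hcompose : ∀ a b : ℕ, f^[a + b] ⁻¹' A = f^[b] ⁻¹' (f^[a] ⁻¹' A) := by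
    intro a b
    ext x
    simp [Function.iterate_add_apply]
  have hPadd : ∀ a b, P a → P b → P (a + b) := by
    intro a b ha hb
    show f^[a + b] ⁻¹' A =ᵐ[μ] A
    rw [hcompose]
    exact ((hit b).quasiMeasurePreserving.preimage_ae_eq ha).trans hb
  have hPsub : ∀ a b, P a → P (a + b) → P b := by
    intro a b ha hab
    have h1 : f^[a + b] ⁻¹' A =ᵐ[μ] f^[b] ⁻¹' A := by
      rw [hcompose]
      exact (hit b).quasiMeasurePreserving.preimage_ae_eq ha
    exact h1.symm.trans hab
  have hex : ∃ d, 0 < d ∧ P d := ⟨N, hN0, hPN'⟩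
  set k := Nat.find hex with hkdef
  obtain ⟨hk0, hPk⟩ := Nat.find_spec hex
  have hkmin : ∀ d, 0 < d → d < k → ¬ P d := fun d hd hdk hP => Nat.find_min hex hdk ⟨hd, hP⟩
  have hkne : (k : ℝ≥0∞) ≠ 0 := Nat.cast_ne_zero.mpr hk0.ne'
  have hktop : (k : ℝ≥0∞) ≠ ∞ := ENNReal.natCast_ne_top k
  have hPmul : ∀ q, P (k * q) := by
    intro q
    induction q with
    | zero => show f^[k * 0] ⁻¹' A =ᵐ[μ] A; simp; exact Filter.EventuallyEq.rfl
    | succ q ih =>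
        have := hPadd _ _ ih hPk
        rwa [Nat.mul_succ]
  have hdvd : k ∣ N := by
    have hmod : P (N % k) := by
      refine hPsub (k * (N / k)) (N % k) (hPmul _) ?_
      rw [Nat.div_add_mod]
      exact hPN'
    rcases Nat.eq_zero_or_pos (N % k) with h | h
    · exact Nat.dvd_of_mod_eq_zero h
    · exact absurd hmod (hkmin _ h (Nat.mod_lt _ hk0))
  -- pairwise a.e. disjointness
  have hinter : ∀ d, 0 < d → d < k → μ (A ∩ f^[d] ⁻¹' A) = 0 := by
    intro d hd hdk
    have htm : MeasurableSet (A ∩ f^[d] ⁻¹' A) := hAm.inter ((hm d) hAm)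
    have hcomm : f^[N] ⁻¹' (f^[d] ⁻¹' A) = f^[d] ⁻¹' (f^[N] ⁻¹' A) := by
      ext x
      simp [← Function.iterate_add_apply, Nat.add_comm]
    have htinv : f^[N] ⁻¹' (A ∩ f^[d] ⁻¹' A) =ᵐ[μ] ((A ∩ f^[d] ⁻¹' A : Set X)) := by
      rw [Set.preimage_inter, hcomm]
      exact aux_inter_ae hAinv ((hit d).quasiMeasurePreserving.preimage_ae_eq hAinv)
    rcases atom _ htm Set.inter_subset_left htinv with h | h
    · exact h
    · exfalso
      apply hkmin d hd hdk
      have hμt : μ (A ∩ f^[d] ⁻¹' A) = μ A := measure_congr h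
      have hμd : μ (f^[d] ⁻¹' A) = μ A := (hit d).measure_preimage hAm.nullMeasurableSet
      have hfin : μ A ≠ ∞ := measure_ne_top μ A
      have e1 : μ (A \ f^[d] ⁻¹' A) = 0 := by
        have h3 := measure_inter_add_diff (μ := μ) A ((hm d) hAm)
        rw [hμt] at h3
        exact (ENNReal.add_right_inj hfin).mp (h3.trans (add_zero (μ A)).symm)
      have e2 : μ (f^[d] ⁻¹' A \ A) = 0 := by
        have h3 := measure_inter_add_diff (μ := μ) (f^[d] ⁻¹' A) hAm
        rw [Set.inter_comm, hμt, hμd] at h3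
        exact (ENNReal.add_right_inj hfin).mp (h3.trans (add_zero (μ A)).symm)
      exact ae_eq_set.mpr ⟨e2, e1⟩
  have hcore : ∀ i j, i < j → j < k → μ (f^[i] ⁻¹' A ∩ f^[j] ⁻¹' A) = 0 := by
    intro i j h hjk
    have hj2 : (j - i) + i = j := by omega
    have hpre : f^[j] ⁻¹' A = f^[i] ⁻¹' (f^[j - i] ⁻¹' A) := by
      calc f^[j] ⁻¹' A = f^[(j - i) + i] ⁻¹' A := by rw [hj2]
        _ = f^[i] ⁻¹' (f^[j - i] ⁻¹' A) := hcompose _ _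
    rw [hpre, ← Set.preimage_inter,
      (hit i).measure_preimage (hAm.inter ((hm _) hAm)).nullMeasurableSet]
    exact hinter (j - i) (by omega) (by omega)
  have hdisj : (↑(Finset.range k) : Set ℕ).Pairwise
      (Function.onFun (MeasureTheory.AEDisjoint μ) fun i => f^[i] ⁻¹' A) := by
    intro i hi j hj hij
    simp only [Finset.coe_range, Set.mem_Iio] at hi hj
    rcases lt_or_gt_of_ne hij with h | h
    · exact hcore i j h hj
    · exact MeasureTheory.AEDisjoint.symm (hcore j i h hi)
  set B : Set X := ⋃ i ∈ Finset.range k, f^[i] ⁻¹' A with hB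
  have hBm : MeasurableSet B := Finset.measurableSet_biUnion _ fun i _ => (hm i) hAm
  have hBfull : μ B = 1 := aux_full hf herg hk0 hAm hPk hApos
  have hsum : ∑ i ∈ Finset.range k, μ (f^[i] ⁻¹' A) = μ B :=
    (measure_biUnion_finset₀ hdisj fun i _ => ((hm i) hAm).nullMeasurableSet).symm
  have hkA : (k : ℝ≥0∞) * μ A = 1 := by
    rw [← hBfull, ← hsum]
    rw [Finset.sum_congr rfl fun i _ => (hit i).measure_preimage hAm.nullMeasurableSet]
    simp [Finset.sum_const, mul_comm]
  have hμA : μ A = (k : ℝ≥0∞)⁻¹ := by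
    calc μ A = (k : ℝ≥0∞)⁻¹ * ((k : ℝ≥0∞) * μ A) := by
          rw [← mul_assoc, ENNReal.inv_mul_cancel hkne hktop, one_mul]
      _ = (k : ℝ≥0∞)⁻¹ := by rw [hkA, mul_one]
  -- the measure ν
  set ν : Measure X := (k : ℝ≥0∞) • μ.restrict A with hν
  have hνapp : ∀ s : Set X, MeasurableSet s → ν s = (k : ℝ≥0∞) * μ (s ∩ A) := by
    intro s hs
    rw [hν, Measure.smul_apply, smul_eq_mul, Measure.restrict_apply hs]
  have hνprob : IsProbabilityMeasure ν := by
    constructor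
    rw [hνapp Set.univ MeasurableSet.univ, Set.univ_inter, hμA,
      ENNReal.mul_inv_cancel hkne hktop]
  have hmapPres : ∀ d, P d → Measure.map (f^[d]) (μ.restrict A) = μ.restrict A := by
    intro d hPd
    calc Measure.map (f^[d]) (μ.restrict A)
        = Measure.map (f^[d]) (μ.restrict (f^[d] ⁻¹' A)) := by
          rw [Measure.restrict_congr_set hPd]
      _ = (Measure.map (f^[d]) μ).restrict A := (Measure.restrict_map (hm d) hAm).symm
      _ = μ.restrict A := by rw [(hit d).map_eq]
  have hνk : MeasurePreserving (f^[k]) ν ν := by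
    refine ⟨hm k, ?_⟩
    rw [hν, Measure.map_smul, hmapPres k hPk]
  have hνN : MeasurePreserving (f^[N]) ν ν := by
    obtain ⟨q, hq⟩ := hdvd
    rw [hq, Function.iterate_mul]
    exact hνk.iterate q
  have hνerg : Ergodic (f^[N]) ν := by
    refine ⟨hνN, ⟨fun s hs hsinv => Filter.eventuallyConst_set'.mpr ?_⟩⟩
    have htinv : f^[N] ⁻¹' (s ∩ A) =ᵐ[μ] ((s ∩ A : Set X)) := by
      rw [Set.preimage_inter, hsinv]
      exact aux_inter_ae (Filter.EventuallyEq.refl (ae μ) (s : Set X)) hAinv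
    rcases atom (s ∩ A) (hs.inter hAm) Set.inter_subset_right htinv with h | h
    · left
      rw [ae_eq_empty, hνapp s hs, h, mul_zero]
    · right
      rw [ae_eq_univ, hνapp sᶜ hs.compl]
      have hμsA : μ (A ∩ s) = μ A := by rw [Set.inter_comm]; exact measure_congr h
      have e : μ (A \ s) = 0 := by
        have h3 := measure_inter_add_diff (μ := μ) A hs
        rw [hμsA] at h3
        exact (ENNReal.add_right_inj (measure_ne_top μ A)).mp
          (h3.trans (add_zero (μ A)).symm)
      rw [Set.inter_comm, ← Set.diff_eq, e, mul_zero]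
  -- the sum identity
  have hmapi : ∀ i ∈ Finset.range k,
      Measure.map (f^[i]) (μ.restrict A) = μ.restrict (f^[(k - i) % k] ⁻¹' A) := by
    intro i hi
    rw [Finset.mem_range] at hi
    have hPji : P ((k - i) % k + i) := by
      rcases Nat.eq_zero_or_pos i with rfl | hi0
      · have h0 : (k - 0) % k + 0 = 0 := by simp [Nat.mod_self]
        rw [h0]
        show f^[0] ⁻¹' A =ᵐ[μ] A
        simp; exact Filter.EventuallyEq.rfl
      · have h0 : (k - i) % k + i = k := by
          rw [Nat.mod_eq_of_lt (by omega)]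
          omega
        rw [h0]
        exact hPk
    have key : f^[i] ⁻¹' (f^[(k - i) % k] ⁻¹' A) =ᵐ[μ] A := by
      rw [← hcompose]
      exact hPji
    calc Measure.map (f^[i]) (μ.restrict A)
        = Measure.map (f^[i]) (μ.restrict (f^[i] ⁻¹' (f^[(k - i) % k] ⁻¹' A))) := by
          rw [Measure.restrict_congr_set key]
      _ = (Measure.map (f^[i]) μ).restrict (f^[(k - i) % k] ⁻¹' A) :=
          (Measure.restrict_map (hm i) ((hm _) hAm)).symm
      _ = μ.restrict (f^[(k - i) % k] ⁻¹' A) := by rw [(hit i).map_eq]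
  have hre : ∑ i ∈ Finset.range k, μ.restrict (f^[(k - i) % k] ⁻¹' A)
      = ∑ j ∈ Finset.range k, μ.restrict (f^[j] ⁻¹' A) := by
    refine Finset.sum_nbij' (fun i => (k - i) % k) (fun j => (k - j) % k) ?_ ?_ ?_ ?_ ?_
    · intro a ha
      rw [Finset.mem_range] at ha ⊢
      exact Nat.mod_lt _ hk0
    · intro a ha
      rw [Finset.mem_range] at ha ⊢
      exact Nat.mod_lt _ hk0
    · intro a ha
      rw [Finset.mem_range] at ha
      show (k - (k - a) % k) % k = a
      rcases Nat.eq_zero_or_pos a with rfl | ha0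
      · simp [Nat.mod_self]
      · rw [Nat.mod_eq_of_lt (show k - a < k by omega),
          Nat.sub_sub_self ha.le, Nat.mod_eq_of_lt ha]
    · intro a ha
      rw [Finset.mem_range] at ha
      show (k - (k - a) % k) % k = a
      rcases Nat.eq_zero_or_pos a with rfl | ha0
      · simp [Nat.mod_self]
      · rw [Nat.mod_eq_of_lt (show k - a < k by omega),
          Nat.sub_sub_self ha.le, Nat.mod_eq_of_lt ha]
    · intro a _
      rfl
  have hsumRestrict : ∑ j ∈ Finset.range k, μ.restrict (f^[j] ⁻¹' A) = μ := by
    ext s hs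
    rw [Measure.finset_sum_apply]
    simp only [Measure.restrict_apply hs]
    have hBc : μ Bᶜ = 0 := by
      rw [measure_compl hBm (measure_ne_top μ B), hBfull, measure_univ, tsub_self]
    have h1 : μ s = μ (s ∩ B) := by
      have h2 : μ (s \ B) = 0 := measure_mono_null (Set.diff_subset_compl s B) hBc
      have h3 := measure_inter_add_diff (μ := μ) s hBm
      rw [h2, add_zero] at h3
      exact h3.symm
    have hdisj2 : (↑(Finset.range k) : Set ℕ).Pairwise
        (Function.onFun (MeasureTheory.AEDisjoint μ) fun i => s ∩ f^[i] ⁻¹' A) :=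
      fun i hi j hj hij =>
        (hdisj hi hj hij).mono Set.inter_subset_right Set.inter_subset_right
    rw [h1, hB, Set.inter_iUnion₂,
      measure_biUnion_finset₀ hdisj2 fun i _ => (hs.inter ((hm i) hAm)).nullMeasurableSet]
  refine ⟨k, ν, hdvd, hνprob, hνk, hνerg, ?_⟩
  have hfinal : ∑ i ∈ Finset.range k, Measure.map (f^[i]) ν = (k : ℝ≥0∞) • μ := by
    calc ∑ i ∈ Finset.range k, Measure.map (f^[i]) ν
        = ∑ i ∈ Finset.range k, (k : ℝ≥0∞) • Measure.map (f^[i]) (μ.restrict A) := by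
          refine Finset.sum_congr rfl fun i _ => ?_
          rw [hν, Measure.map_smul]
      _ = (k : ℝ≥0∞) • ∑ i ∈ Finset.range k, Measure.map (f^[i]) (μ.restrict A) :=
          (Finset.smul_sum).symm
      _ = (k : ℝ≥0∞) • ∑ i ∈ Finset.range k, μ.restrict (f^[(k - i) % k] ⁻¹' A) := by
          rw [Finset.sum_congr rfl hmapi]
      _ = (k : ℝ≥0∞) • μ := by rw [hre, hsumRestrict]
  rw [hfinal, smul_smul, ENNReal.inv_mul_cancel hkne hktop, one_smul]
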